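/- Let S be a finite set, and write dir(S) for the set of functions o : S → {−, 0, +}, with degree deg(o) := |o⁻¹(0)|. For o ∈ dir(S), s ∈ S with o(s) = 0, and ? ∈ {+, −}, let o_s^? ∈ dir(S) denote the function agreeing with o away from s and with value ? at s. Suppose given ℚ-vector spaces V_o for each o ∈ dir(S) and, for each s ∈ S and o ∈ dir(S) with o(s) = 0, linear isomorphisms d_s^+ : V_o → V_{o_s^+} and d_s^− : V_o → V_{o_s^−}, such that for all ?, ?' ∈ {+, −} and all s ≠ s' in S with o(s) = 0 = o(s') one has d_s^? ∘ d_{s'}^{?'} = −d_{s'}^{?'} ∘ d_s^? as maps V_o → V_{(o_{s'}^{?'})_s^?}. Let C be the graded vector space with C_p = ⊕_{o : deg(o) = p} V_o, equipped with the map d := Σ_{s ∈ S} (d_s^+ + d_s^−), where d_s^? is taken to be zero on V_o whenever o(s) ≠ 0. Then d ∘ d = 0, so (C, d) is a chain complex, and its homology is concentrated in degree 0, i.e. H_p(C) = 0 for all p ≠ 0. -/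

import Mathlib

open DirectSum

section Cube

variable {S : Type} [Fintype S] [DecidableEq S]

/-- The degree of `o : S → {-, 0, +}` is the number of `s` with `o s = 0`. -/
def deg (o : S → SignType) : ℕ := (Finset.univ.filter fun s => o s = 0).card

lemma deg_update (o : S → SignType) (s : S) (h : o s = 0) (a : SignType) (ha : a ≠ 0) :
    deg (Function.update o s a) + 1 = deg o := by
  unfold deg
  have hfil : (Finset.univ.filter fun t => Function.update o s a t = 0) =
      (Finset.univ.filter fun t => o t = 0).erase s := by
    ext t
    rcases eq_or_ne t s with rfl | hts
    · simp [Function.update_self, ha]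
    · simp [Function.update_of_ne hts, hts]
  rw [hfil, Finset.card_erase_of_mem (by simp [h])]
  have hpos : 0 < (Finset.univ.filter fun t => o t = 0).card :=
    Finset.card_pos.2 ⟨s, by simp [h]⟩
  omega

variable (V : (S → SignType) → Type) [∀ o, AddCommGroup (V o)] [∀ o, Module ℚ (V o)]

/-- Transport along an equality of indices. -/
def vcast {o o' : S → SignType} (h : o = o') : V o ≃ₗ[ℚ] V o' := by
  subst h; exact LinearEquiv.refl ℚ (V o)

/-- The degree-`p` part `C_p = ⊕_{deg o = p} V_o`. -/
noncomputable def Cplx (p : ℕ) : Type := ⨁ (o : {o : S → SignType // deg o = p}), V o.1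

noncomputable instance (p : ℕ) : AddCommGroup (Cplx V p) := by
  unfold Cplx; infer_instance

noncomputable instance (p : ℕ) : Module ℚ (Cplx V p) := by
  unfold Cplx; infer_instance

variable (dd : ∀ (s : S) (a : SignType) (o : S → SignType), V o →ₗ[ℚ] V (Function.update o s a))

/-- The differential `d = Σ_s (d_s^+ + d_s^-) : C_{p+1} → C_p`. -/
noncomputable def Dmap (p : ℕ) : Cplx V (p + 1) →ₗ[ℚ] Cplx V p :=
  DirectSum.toModule ℚ {o : S → SignType // deg o = p + 1} (Cplx V p) fun o =>
    ∑ s : S,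
      if h : o.1 s = 0 then
        (DirectSum.lof ℚ {o : S → SignType // deg o = p} (fun o => V o.1)
            ⟨Function.update o.1 s 1, by
              have h1 := deg_update o.1 s h 1 (by decide)
              have h2 := o.2
              omega⟩).comp (dd s 1 o.1) +
        (DirectSum.lof ℚ {o : S → SignType // deg o = p} (fun o => V o.1)
            ⟨Function.update o.1 s (-1), by
              have h1 := deg_update o.1 s h (-1) (by decide)
              have h2 := o.2
              omega⟩).comp (dd s (-1) o.1)
      else 0

end Cube

set_option linter.unusedSectionVars false
set_option maxHeartbeats 1600000

section Aux

variable {S : Type} [Fintype S] [DecidableEq S]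
variable (V : (S → SignType) → Type) [∀ o, AddCommGroup (V o)] [∀ o, Module ℚ (V o)]

@[simp] lemma vcast_rfl (o : S → SignType) (v : V o) : vcast V rfl v = v := rfl

lemma vcast_vcast {o o' o'' : S → SignType} (e : o = o') (e' : o' = o'') (v : V o) :
    vcast V e' (vcast V e v) = vcast V (e.trans e') v := by subst e; subst e'; rfl

lemma vcast_self {o : S → SignType} (e : o = o) (v : V o) : vcast V e v = v := by
  rw [Subsingleton.elim e rfl]; rfl

lemma update_eq_self' (o : S → SignType) (s : S) (a : SignType) (h : o s = a) :
    Function.update o s a = o := by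
  rw [← h]; exact Function.update_eq_self s o

/-- The number of coordinates where `o` takes value `+`. -/
def plusCount (o : S → SignType) : ℕ := (Finset.univ.filter fun s => o s = 1).card

lemma plusCount_le (o : S → SignType) : plusCount o ≤ Fintype.card S :=
  (Finset.card_filter_le _ _).trans (le_of_eq (Finset.card_univ))

lemma plusCount_pos (o : S → SignType) (s : S) (h : o s = 1) : 0 < plusCount o :=
  Finset.card_pos.2 ⟨s, by simp [h]⟩

lemma deg_pos (o : S → SignType) (s : S) (h : o s = 0) : 0 < deg o :=
  Finset.card_pos.2 ⟨s, by simp [h]⟩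

lemma deg_upd0 (o : S → SignType) (s : S) (h : o s = 1) :
    deg (Function.update o s 0) = deg o + 1 := by
  have h1 := deg_update (Function.update o s 0) s (by simp) 1 (by decide)
  rw [Function.update_idem, update_eq_self' o s 1 h] at h1
  omega

lemma plusCount_J (o : S → SignType) (s : S) (h : o s = 1) :
    plusCount (Function.update (Function.update o s 0) s (-1)) + 1 = plusCount o := by
  unfold plusCount
  have hfil : (Finset.univ.filter fun t => Function.update (Function.update o s 0) s (-1) t = 1) =
      (Finset.univ.filter fun t => o t = 1).erase s := by
    ext t
    rcases eq_or_ne t s with rfl | hts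
    · simp
    · simp [Function.update_of_ne hts, hts]
  rw [hfil, Finset.card_erase_of_mem (by simp [h])]
  have hpos := plusCount_pos o s h
  unfold plusCount at hpos
  omega

variable (dd : ∀ (s : S) (a : SignType) (o : S → SignType), V o →ₗ[ℚ] V (Function.update o s a))

lemma dd_vcast (s : S) (a : SignType) {o o' : S → SignType} (e : o = o')
    (e2 : Function.update o s a = Function.update o' s a) (v : V o) :
    dd s a o' (vcast V e v) = vcast V e2 (dd s a o v) := by
  subst e; rw [vcast_self, vcast_self]

/-- canonical inclusion of a component into the direct sum -/
noncomputable abbrev iota (p : ℕ) (o : S → SignType) (h : deg o = p) : V o →ₗ[ℚ] Cplx V p :=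
  DirectSum.lof ℚ {o : S → SignType // deg o = p} (fun o => V o.1) ⟨o, h⟩

lemma lof_vcast (p : ℕ) {o o' : S → SignType} (e : o = o') (h : deg o = p) (h' : deg o' = p)
    (v : V o) : iota V p o' h' (vcast V e v) = iota V p o h v := by subst e; rfl

variable (hiso : ∀ (s : S) (o : S → SignType), o s = 0 →
      ∀ a : SignType, a ≠ 0 → Function.Bijective (dd s a o))

/-- inverse of `d_s^+ : V_{o_s^0} → V_o`, for `o s = +`. -/
noncomputable def hmap (s : S) (o : S → SignType) (h : o s = 1) :
    V o →ₗ[ℚ] V (Function.update o s 0) :=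
  ((LinearEquiv.ofBijective (dd s 1 (Function.update o s 0))
      (hiso s (Function.update o s 0) (by simp) 1 (by decide))).symm.toLinearMap).comp
    (vcast V (show o = Function.update (Function.update o s 0) s 1 by
      rw [Function.update_idem, update_eq_self' o s 1 h])).toLinearMap

lemma hmap_dd (s : S) (o : S → SignType) (h : o s = 1)
    (e : Function.update (Function.update o s 0) s 1 = o) (v : V (Function.update o s 0)) :
    hmap V dd hiso s o h (vcast V e (dd s 1 (Function.update o s 0) v)) = v := by
  unfold hmap
  simp only [LinearMap.comp_apply, LinearEquiv.coe_toLinearMap]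
  rw [vcast_vcast, vcast_self]
  exact LinearEquiv.symm_apply_apply _ _

lemma dd_hmap (s : S) (o : S → SignType) (h : o s = 1)
    (e : o = Function.update (Function.update o s 0) s 1) (v : V o) :
    dd s 1 (Function.update o s 0) (hmap V dd hiso s o h v) = vcast V e v := by
  unfold hmap
  simp only [LinearMap.comp_apply, LinearEquiv.coe_toLinearMap]
  exact LinearEquiv.apply_symm_apply (LinearEquiv.ofBijective (dd s 1 (Function.update o s 0))
      (hiso s (Function.update o s 0) (by simp) 1 (by decide))) (vcast V e v)

lemma hmap_dd' (s : S) (w o₂ : S → SignType) (hw : w s = 0)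
    (e : Function.update w s 1 = o₂) (h₂ : o₂ s = 1)
    (e' : w = Function.update o₂ s 0) (y : V w) :
    hmap V dd hiso s o₂ h₂ (vcast V e (dd s 1 w y)) = vcast V e' y := by
  have hy : y = vcast V e'.symm (vcast V e' y) := by rw [vcast_vcast, vcast_self]
  rw [hy, dd_vcast V dd s 1 e'.symm (by rw [e'.symm]), vcast_vcast]
  rw [hmap_dd]
  rw [vcast_vcast, vcast_vcast]

lemma hmap_dd'' (s : S) (w : S → SignType) (hw : w s = 0) (h₂ : (Function.update w s 1) s = 1)
    (e' : w = Function.update (Function.update w s 1) s 0) (y : V w) :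
    hmap V dd hiso s (Function.update w s 1) h₂ (dd s 1 w y) = vcast V e' y := by
  have := hmap_dd' V dd hiso s w (Function.update w s 1) hw rfl h₂ e' y
  rwa [vcast_rfl] at this

include hiso in
lemma exists_dd (t : S) (o : S → SignType) (ht : o t = 1)
    (e : Function.update (Function.update o t 0) t 1 = o) (v : V o) :
    ∃ u : V (Function.update o t 0), v = vcast V e (dd t 1 (Function.update o t 0) u) := by
  obtain ⟨u, hu⟩ := (hiso t (Function.update o t 0) (by simp) 1 (by decide)).2
    ((vcast V e).symm v)
  exact ⟨u, by rw [hu, LinearEquiv.apply_symm_apply]⟩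

variable (hanti : ∀ (s s' : S) (hss' : s ≠ s') (o : S → SignType), o s = 0 → o s' = 0 →
      ∀ (a b : SignType), a ≠ 0 → b ≠ 0 →
        (dd s b (Function.update o s' a)).comp (dd s' a o) =
          -((vcast V (Function.update_comm hss' b a o)).toLinearMap.comp
              ((dd s' a (Function.update o s b)).comp (dd s b o))))

include hanti in
lemma ac (s t : S) (hts : t ≠ s) (o : S → SignType) (hs : o s = 0) (ht : o t = 0)
    (a b : SignType) (ha : a ≠ 0) (hb : b ≠ 0) (q : ℕ)
    (pf1 : deg (Function.update (Function.update o s a) t b) = q)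
    (pf2 : deg (Function.update (Function.update o t b) s a) = q) (v : V o) :
    iota V q _ pf1 (dd t b (Function.update o s a) (dd s a o v)) =
      -iota V q _ pf2 (dd s a (Function.update o t b) (dd t b o v)) := by
  have h2 := LinearMap.congr_fun (hanti t s hts o ht hs a b ha hb) v
  simp only [LinearMap.comp_apply, LinearMap.neg_apply, LinearEquiv.coe_toLinearMap] at h2
  rw [h2, map_neg, lof_vcast]

include hanti in
lemma ach (s t : S) (hst : s ≠ t) (o : S → SignType) (hs : o s = 0) (ht : o t = 1)
    (a : SignType) (ha : a ≠ 0) (q : ℕ)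
    (pfA : deg (Function.update (Function.update o t 0) s a) = q)
    (ht' : (Function.update o s a) t = 1)
    (pfB : deg (Function.update (Function.update o s a) t 0) = q) (v : V o) :
    iota V q _ pfA (dd s a (Function.update o t 0) (hmap V dd hiso t o ht v))
      + iota V q _ pfB (hmap V dd hiso t (Function.update o s a) ht'
          (dd s a o v)) = 0 := by
  set w := Function.update o t 0 with hwdef
  have hwt : w t = 0 := by simp [hwdef]
  have hws : w s = 0 := by rw [hwdef, Function.update_of_ne hst]; exact hs
  have e : Function.update w t 1 = o := by
    rw [hwdef, Function.update_idem, update_eq_self' o t 1 ht]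
  obtain ⟨u, hu⟩ := exists_dd V dd hiso t o ht e v
  rw [hu]
  rw [hmap_dd V dd hiso t o ht _ u]
  rw [dd_vcast V dd s a e (by rw [e]) (dd t 1 w u)]
  have hanti' := LinearMap.congr_fun (hanti s t hst w hws hwt 1 a (by decide) ha) u
  simp only [LinearMap.comp_apply, LinearMap.neg_apply, LinearEquiv.coe_toLinearMap] at hanti'
  rw [hanti', map_neg, vcast_vcast, map_neg, map_neg]
  have hwsat : (Function.update w s a) t = 0 := by
    rw [Function.update_of_ne (Ne.symm hst)]; exact hwt
  have e'' : Function.update w s a = Function.update (Function.update o s a) t 0 := by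
    rw [← e, Function.update_comm hst, Function.update_idem, update_eq_self' w t 0 hwt]
  rw [hmap_dd' V dd hiso t (Function.update w s a) (Function.update o s a) hwsat _ ht' e''
    (dd s a w u)]
  rw [lof_vcast]
  exact add_neg_cancel _

/-- the homotopy `H` -/
noncomputable def Hmap (q : ℕ) : Cplx V q →ₗ[ℚ] Cplx V (q + 1) :=
  DirectSum.toModule ℚ {o : S → SignType // deg o = q} (Cplx V (q + 1)) fun o =>
    ∑ s : S,
      if h : o.1 s = 1 then
        (DirectSum.lof ℚ {o : S → SignType // deg o = q + 1} (fun o => V o.1)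
            ⟨Function.update o.1 s 0, by rw [deg_upd0 o.1 s h, o.2]⟩).comp
          (hmap V dd hiso s o.1 h)
      else 0

/-- the "junk" operator `J = Σ d_s^- (d_s^+)⁻¹` -/
noncomputable def Jmap (q : ℕ) : Cplx V q →ₗ[ℚ] Cplx V q :=
  DirectSum.toModule ℚ {o : S → SignType // deg o = q} (Cplx V q) fun o =>
    ∑ s : S,
      if h : o.1 s = 1 then
        (DirectSum.lof ℚ {o : S → SignType // deg o = q} (fun o => V o.1)
            ⟨Function.update (Function.update o.1 s 0) s (-1), by
              have h1 := deg_update (Function.update o.1 s 0) s (by simp) (-1) (by decide)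
              have h2 := deg_upd0 o.1 s h
              have h3 := o.2
              omega⟩).comp
          ((dd s (-1) (Function.update o.1 s 0)).comp (hmap V dd hiso s o.1 h))
      else 0

/-- the diagonal operator -/
noncomputable def Dl (q : ℕ) : Cplx V q →ₗ[ℚ] Cplx V q :=
  DirectSum.toModule ℚ {o : S → SignType // deg o = q} (Cplx V q) fun o =>
    ((plusCount o.1 + deg o.1 : ℕ) : ℚ) •
      DirectSum.lof ℚ {o : S → SignType // deg o = q} (fun o => V o.1) o

/-- inverse of the diagonal operator -/
noncomputable def Dl' (q : ℕ) : Cplx V q →ₗ[ℚ] Cplx V q :=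
  DirectSum.toModule ℚ {o : S → SignType // deg o = q} (Cplx V q) fun o =>
    (((plusCount o.1 + deg o.1 : ℕ) : ℚ))⁻¹ •
      DirectSum.lof ℚ {o : S → SignType // deg o = q} (fun o => V o.1) o

lemma Dmap_lof (p : ℕ) (o : S → SignType) (ho : deg o = p + 1) (v : V o) :
    Dmap V dd p (iota V (p + 1) o ho v) =
      ∑ s : S, if h : o s = 0 then
        iota V p (Function.update o s 1)
            (by have := deg_update o s h 1 (by decide); omega) (dd s 1 o v)
        + iota V p (Function.update o s (-1))
            (by have := deg_update o s h (-1) (by decide); omega) (dd s (-1) o v)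
      else 0 := by
  unfold Dmap
  erw [DirectSum.toModule_lof]
  rw [LinearMap.sum_apply]
  refine Finset.sum_congr rfl fun s _ => ?_
  split_ifs with h
  · simp only [LinearMap.add_apply, LinearMap.comp_apply]; erw [dif_pos (show o s = 0 from h)]; rfl
  · erw [dif_neg h]; rfl

lemma Hmap_lof (q : ℕ) (o : S → SignType) (ho : deg o = q) (v : V o) :
    Hmap V dd hiso q (iota V q o ho v) =
      ∑ s : S, if h : o s = 1 then
        iota V (q + 1) (Function.update o s 0) (by rw [deg_upd0 o s h, ho])
          (hmap V dd hiso s o h v)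
      else 0 := by
  unfold Hmap
  erw [DirectSum.toModule_lof]
  rw [LinearMap.sum_apply]
  refine Finset.sum_congr rfl fun s _ => ?_
  split_ifs with h
  · simp only [LinearMap.comp_apply]; erw [dif_pos (show o s = 1 from h)]; rfl
  · erw [dif_neg h]; rfl

lemma Jmap_lof (q : ℕ) (o : S → SignType) (ho : deg o = q) (v : V o) :
    Jmap V dd hiso q (iota V q o ho v) =
      ∑ s : S, if h : o s = 1 then
        iota V q (Function.update (Function.update o s 0) s (-1))
            (by have h1 := deg_update (Function.update o s 0) s (by simp) (-1) (by decide)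
                have h2 := deg_upd0 o s h
                omega)
          (dd s (-1) (Function.update o s 0) (hmap V dd hiso s o h v))
      else 0 := by
  unfold Jmap
  erw [DirectSum.toModule_lof]
  rw [LinearMap.sum_apply]
  refine Finset.sum_congr rfl fun s _ => ?_
  split_ifs with h
  · simp only [LinearMap.comp_apply]; erw [dif_pos (show o s = 1 from h)]; rfl
  · erw [dif_neg h]; rfl

lemma Dl_lof (q : ℕ) (o : S → SignType) (ho : deg o = q) (v : V o) :
    Dl V q (iota V q o ho v) = ((plusCount o + deg o : ℕ) : ℚ) • iota V q o ho v := by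
  unfold Dl
  erw [DirectSum.toModule_lof]
  rfl

lemma Dl'_lof (q : ℕ) (o : S → SignType) (ho : deg o = q) (v : V o) :
    Dl' V q (iota V q o ho v) = (((plusCount o + deg o : ℕ) : ℚ))⁻¹ • iota V q o ho v := by
  unfold Dl'
  erw [DirectSum.toModule_lof]
  rfl


lemma sum_antisym {M : Type} [AddCommGroup M] [Module ℚ M] (f : S → S → M)
    (hf : ∀ s t, f s t = -f t s) : (∑ s : S, ∑ t : S, f s t) = 0 := by
  have h : (∑ s : S, ∑ t : S, f s t) = -(∑ s : S, ∑ t : S, f s t) := by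
    conv_lhs => rw [Finset.sum_comm]
    rw [← Finset.sum_neg_distrib]
    refine Finset.sum_congr rfl fun s _ => ?_
    rw [← Finset.sum_neg_distrib]
    exact Finset.sum_congr rfl fun t _ => hf t s
  have h2 : (2 : ℚ) • (∑ s : S, ∑ t : S, f s t) = 0 := by
    rw [two_smul]
    nth_rewrite 2 [h]
    exact add_neg_cancel _
  have := smul_eq_zero.mp h2
  tauto

lemma deg_upd2 (o : S → SignType) (s t : S) (hs : o s = 0) (ht : o t = 0) (hst : s ≠ t)
    (a b : SignType) (ha : a ≠ 0) (hb : b ≠ 0) :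
    deg (Function.update (Function.update o s a) t b) + 2 = deg o := by
  have h1 := deg_update o s hs a ha
  have h2 : (Function.update o s a) t = 0 := by
    rw [Function.update_of_ne (Ne.symm hst)]; exact ht
  have h3 := deg_update (Function.update o s a) t h2 b hb
  omega

variable [∀ o, AddCommGroup (V o)] [∀ o, Module ℚ (V o)] in
private noncomputable def Gterm (p : ℕ) (o : S → SignType) (ho : deg o = p + 2) (v : V o)
    (s t : S) : Cplx V p :=
  if h : o s = 0 ∧ o t = 0 ∧ s ≠ t then
    ((iota V p (Function.update (Function.update o s 1) t 1)
        (by have := deg_upd2 o s t h.1 h.2.1 h.2.2 1 1 (by decide) (by decide); omega)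
        (dd t 1 (Function.update o s 1) (dd s 1 o v)) +
      iota V p (Function.update (Function.update o s 1) t (-1))
        (by have := deg_upd2 o s t h.1 h.2.1 h.2.2 1 (-1) (by decide) (by decide); omega)
        (dd t (-1) (Function.update o s 1) (dd s 1 o v))) +
     (iota V p (Function.update (Function.update o s (-1)) t 1)
        (by have := deg_upd2 o s t h.1 h.2.1 h.2.2 (-1) 1 (by decide) (by decide); omega)
        (dd t 1 (Function.update o s (-1)) (dd s (-1) o v)) +
      iota V p (Function.update (Function.update o s (-1)) t (-1))
        (by have := deg_upd2 o s t h.1 h.2.1 h.2.2 (-1) (-1) (by decide) (by decide); omega)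
        (dd t (-1) (Function.update o s (-1)) (dd s (-1) o v))))
  else 0

include hanti in
private lemma Gterm_antisym (p : ℕ) (o : S → SignType) (ho : deg o = p + 2) (v : V o)
    (s t : S) : Gterm V dd p o ho v s t = -Gterm V dd p o ho v t s := by
  unfold Gterm
  by_cases h : o s = 0 ∧ o t = 0 ∧ s ≠ t
  · have h' : o t = 0 ∧ o s = 0 ∧ t ≠ s := ⟨h.2.1, h.1, Ne.symm h.2.2⟩
    rw [dif_pos h, dif_pos h']
    obtain ⟨hs, ht, hst⟩ := h
    have hts : t ≠ s := Ne.symm hst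
    rw [ac V dd hanti s t hts o hs ht 1 1 (by decide) (by decide) p _
          (by have := deg_upd2 o t s ht hs hts 1 1 (by decide) (by decide); omega) v,
        ac V dd hanti s t hts o hs ht 1 (-1) (by decide) (by decide) p _
          (by have := deg_upd2 o t s ht hs hts (-1) 1 (by decide) (by decide); omega) v,
        ac V dd hanti s t hts o hs ht (-1) 1 (by decide) (by decide) p _
          (by have := deg_upd2 o t s ht hs hts 1 (-1) (by decide) (by decide); omega) v,
        ac V dd hanti s t hts o hs ht (-1) (-1) (by decide) (by decide) p _
          (by have := deg_upd2 o t s ht hs hts (-1) (-1) (by decide) (by decide); omega) v]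
    abel
  · have h' : ¬(o t = 0 ∧ o s = 0 ∧ t ≠ s) := by tauto
    rw [dif_neg h, dif_neg h', neg_zero]

include hanti in
lemma Dsq (p : ℕ) : (Dmap V dd p).comp (Dmap V dd (p + 1)) = 0 := by
  apply DirectSum.linearMap_ext
  rintro ⟨o, ho⟩
  apply LinearMap.ext
  intro v
  simp only [LinearMap.comp_apply, LinearMap.zero_comp, LinearMap.zero_apply]
  show Dmap V dd p (Dmap V dd (p + 1) (iota V (p + 1 + 1) o ho v)) = 0
  erw [Dmap_lof V dd (p + 1) o ho v, map_sum]
  have hstep : (∑ s : S, Dmap V dd p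
      (if h : o s = 0 then
        iota V (p + 1) (Function.update o s 1)
            (by have := deg_update o s h 1 (by decide); omega) (dd s 1 o v)
        + iota V (p + 1) (Function.update o s (-1))
            (by have := deg_update o s h (-1) (by decide); omega) (dd s (-1) o v)
      else 0)) = ∑ s : S, ∑ t : S, Gterm V dd p o ho v s t := by
    refine Finset.sum_congr rfl fun s _ => ?_
    by_cases hs : o s = 0
    · rw [dif_pos hs, map_add]
      erw [Dmap_lof V dd p (Function.update o s 1)
            (by have := deg_update o s hs 1 (by decide); omega) (dd s 1 o v),
          Dmap_lof V dd p (Function.update o s (-1))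
            (by have := deg_update o s hs (-1) (by decide); omega) (dd s (-1) o v)]
      rw [← Finset.sum_add_distrib]
      refine Finset.sum_congr rfl fun t _ => ?_
      unfold Gterm
      by_cases hts : s = t
      · subst hts
        rw [dif_neg (by simp), dif_neg (by simp), dif_neg (by simp)]
        simp
      · by_cases ht : o t = 0
        · have h1 : (Function.update o s 1) t = 0 := by
            rw [Function.update_of_ne (Ne.symm hts)]; exact ht
          have h2 : (Function.update o s (-1)) t = 0 := by
            rw [Function.update_of_ne (Ne.symm hts)]; exact ht
          rw [dif_pos h1, dif_pos h2, dif_pos (⟨hs, ht, hts⟩ : o s = 0 ∧ o t = 0 ∧ s ≠ t)]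
        · have h1 : ¬(Function.update o s 1) t = 0 := by
            rw [Function.update_of_ne (Ne.symm hts)]; exact ht
          have h2 : ¬(Function.update o s (-1)) t = 0 := by
            rw [Function.update_of_ne (Ne.symm hts)]; exact ht
          rw [dif_neg h1, dif_neg h2, dif_neg (show ¬(o s = 0 ∧ o t = 0 ∧ s ≠ t) by tauto)]
          simp
    · rw [dif_neg hs, map_zero]
      symm
      refine Finset.sum_eq_zero fun t _ => ?_
      unfold Gterm
      rw [dif_neg (show ¬(o s = 0 ∧ o t = 0 ∧ s ≠ t) by tauto)]
  rw [hstep]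
  exact sum_antisym (fun s t => Gterm V dd p o ho v s t)
    (fun s t => Gterm_antisym V dd hanti p o ho v s t)


lemma deg0_ne (o : S → SignType) (hdeg : deg o = 0) (s : S) : o s ≠ 0 := by
  intro h; have := deg_pos o s h; omega

lemma plus0_ne (o : S → SignType) (hp : plusCount o = 0) (s : S) : o s ≠ 1 := by
  intro h; have := plusCount_pos o s h; omega

/-- term of `D ∘ H`: `H` at coordinate `t`, then `D` at coordinate `s`. -/
private noncomputable def Aterm (q : ℕ) (o : S → SignType) (ho : deg o = q) (v : V o)
    (s t : S) : Cplx V q :=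
  if h : o t = 1 then
    (if h2 : (Function.update o t 0) s = 0 then
      iota V q (Function.update (Function.update o t 0) s 1)
        (by have h3 := deg_upd0 o t h
            have h4 := deg_update (Function.update o t 0) s h2 1 (by decide); omega)
        (dd s 1 (Function.update o t 0) (hmap V dd hiso t o h v)) +
      iota V q (Function.update (Function.update o t 0) s (-1))
        (by have h3 := deg_upd0 o t h
            have h4 := deg_update (Function.update o t 0) s h2 (-1) (by decide); omega)
        (dd s (-1) (Function.update o t 0) (hmap V dd hiso t o h v))
    else 0)
  else 0

/-- term of `H ∘ D`: `D` at coordinate `s`, then `H` at coordinate `t`. -/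
private noncomputable def Bterm (q : ℕ) (o : S → SignType) (ho : deg o = q) (v : V o)
    (s t : S) : Cplx V q :=
  if h : o s = 0 then
    (if h2 : (Function.update o s 1) t = 1 then
      iota V q (Function.update (Function.update o s 1) t 0)
        (by have h3 := deg_update o s h 1 (by decide)
            have h4 := deg_upd0 (Function.update o s 1) t h2; omega)
        (hmap V dd hiso t (Function.update o s 1) h2 (dd s 1 o v))
    else 0) +
    (if h2 : (Function.update o s (-1)) t = 1 then
      iota V q (Function.update (Function.update o s (-1)) t 0)
        (by have h3 := deg_update o s h (-1) (by decide)
            have h4 := deg_upd0 (Function.update o s (-1)) t h2; omega)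
        (hmap V dd hiso t (Function.update o s (-1)) h2 (dd s (-1) o v))
    else 0)
  else 0

private lemma stepA (q : ℕ) (o : S → SignType) (ho : deg o = q) (v : V o) :
    Dmap V dd q (Hmap V dd hiso q (iota V q o ho v)) =
      ∑ s : S, ∑ t : S, Aterm V dd hiso q o ho v s t := by
  erw [Hmap_lof V dd hiso q o ho v]
  rw [map_sum]
  rw [show (∑ s : S, ∑ t : S, Aterm V dd hiso q o ho v s t)
      = ∑ t : S, ∑ s : S, Aterm V dd hiso q o ho v s t from Finset.sum_comm]
  refine Finset.sum_congr rfl fun t _ => ?_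
  by_cases h : o t = 1
  · rw [dif_pos h]
    erw [Dmap_lof V dd q (Function.update o t 0) (by rw [deg_upd0 o t h, ho])
      (hmap V dd hiso t o h v)]
    refine Finset.sum_congr rfl fun s _ => ?_
    unfold Aterm
    rw [dif_pos h]
  · rw [dif_neg h, map_zero]
    symm
    refine Finset.sum_eq_zero fun s _ => ?_
    unfold Aterm
    rw [dif_neg h]

private lemma stepB (p : ℕ) (o : S → SignType) (ho : deg o = p + 1) (v : V o) :
    Hmap V dd hiso p (Dmap V dd p (iota V (p + 1) o ho v)) =
      ∑ s : S, ∑ t : S, Bterm V dd hiso (p + 1) o ho v s t := by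
  erw [Dmap_lof V dd p o ho v]
  rw [map_sum]
  refine Finset.sum_congr rfl fun s _ => ?_
  by_cases h : o s = 0
  · rw [dif_pos h, map_add]
    erw [Hmap_lof V dd hiso p (Function.update o s 1)
        (by have := deg_update o s h 1 (by decide); omega) (dd s 1 o v),
      Hmap_lof V dd hiso p (Function.update o s (-1))
        (by have := deg_update o s h (-1) (by decide); omega) (dd s (-1) o v)]
    rw [← Finset.sum_add_distrib]
    refine Finset.sum_congr rfl fun t _ => ?_
    unfold Bterm
    rw [dif_pos h]
  · rw [dif_neg h, map_zero]
    symm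
    refine Finset.sum_eq_zero fun t _ => ?_
    unfold Bterm
    rw [dif_neg h]

include hanti in
private lemma AB_off (q : ℕ) (o : S → SignType) (ho : deg o = q) (v : V o) (s t : S)
    (hst : s ≠ t) :
    Bterm V dd hiso q o ho v s t + Aterm V dd hiso q o ho v s t = 0 := by
  unfold Aterm Bterm
  by_cases hs : o s = 0
  · by_cases ht : o t = 1
    · have hA : (Function.update o t 0) s = 0 := by
        rw [Function.update_of_ne hst]; exact hs
      have hB1 : (Function.update o s 1) t = 1 := by
        rw [Function.update_of_ne (Ne.symm hst)]; exact ht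
      have hB2 : (Function.update o s (-1)) t = 1 := by
        rw [Function.update_of_ne (Ne.symm hst)]; exact ht
      rw [dif_pos hs, dif_pos ht, dif_pos hA, dif_pos hB1, dif_pos hB2]
      have e1 := ach V dd hiso hanti s t hst o hs ht 1 (by decide) q
        (by have h3 := deg_upd0 o t ht
            have h4 := deg_update (Function.update o t 0) s hA 1 (by decide); omega)
        hB1
        (by have h3 := deg_update o s hs 1 (by decide)
            have h4 := deg_upd0 (Function.update o s 1) t hB1; omega) v
      have e2 := ach V dd hiso hanti s t hst o hs ht (-1) (by decide) q
        (by have h3 := deg_upd0 o t ht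
            have h4 := deg_update (Function.update o t 0) s hA (-1) (by decide); omega)
        hB2
        (by have h3 := deg_update o s hs (-1) (by decide)
            have h4 := deg_upd0 (Function.update o s (-1)) t hB2; omega) v
      rw [show ∀ x1 x2 y1 y2 : Cplx V q, (x1 + x2) + (y1 + y2) = (y1 + x1) + (y2 + x2) from
        fun _ _ _ _ => by abel]
      rw [e1, e2, add_zero]
    · have hB1 : ¬(Function.update o s 1) t = 1 := by
        rw [Function.update_of_ne (Ne.symm hst)]; exact ht
      have hB2 : ¬(Function.update o s (-1)) t = 1 := by
        rw [Function.update_of_ne (Ne.symm hst)]; exact ht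
      rw [dif_pos hs, dif_neg hB1, dif_neg hB2, dif_neg ht]
      simp
  · by_cases ht : o t = 1
    · have hA : ¬(Function.update o t 0) s = 0 := by
        rw [Function.update_of_ne hst]; exact hs
      rw [dif_neg hs, dif_pos ht, dif_neg hA]
      simp
    · rw [dif_neg hs, dif_neg ht]
      simp

private lemma Adiag (q : ℕ) (o : S → SignType) (ho : deg o = q) (v : V o) (s : S) :
    Aterm V dd hiso q o ho v s s =
      (if o s = 1 then iota V q o ho v else 0) +
      (if h : o s = 1 then
        iota V q (Function.update (Function.update o s 0) s (-1))
          (by have h1 := deg_update (Function.update o s 0) s (by simp) (-1) (by decide)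
              have h2 := deg_upd0 o s h
              omega)
          (dd s (-1) (Function.update o s 0) (hmap V dd hiso s o h v))
      else 0) := by
  unfold Aterm
  by_cases h : o s = 1
  · have h2 : (Function.update o s 0) s = 0 := by simp
    rw [dif_pos h, dif_pos h2, if_pos h, dif_pos h]
    congr 1
    have e : o = Function.update (Function.update o s 0) s 1 := by
      rw [Function.update_idem, update_eq_self' o s 1 h]
    rw [dd_hmap V dd hiso s o h e v, lof_vcast]
  · rw [dif_neg h, if_neg h, dif_neg h, add_zero]

private lemma Bdiag (q : ℕ) (o : S → SignType) (ho : deg o = q) (v : V o) (s : S) :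
    Bterm V dd hiso q o ho v s s = if o s = 0 then iota V q o ho v else 0 := by
  unfold Bterm
  by_cases h : o s = 0
  · have h2 : (Function.update o s 1) s = 1 := by simp
    have h3 : ¬(Function.update o s (-1)) s = 1 := by simp
    rw [dif_pos h, dif_pos h2, dif_neg h3, if_pos h, add_zero]
    have e' : o = Function.update (Function.update o s 1) s 0 := by
      rw [Function.update_idem, update_eq_self' o s 0 h]
    rw [hmap_dd'' V dd hiso s o h h2 e' v, lof_vcast]
  · rw [dif_neg h, if_neg h]


private lemma sum_diag (q : ℕ) (o : S → SignType) (ho : deg o = q) (v : V o) :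
    (∑ s : S, (Bterm V dd hiso q o ho v s s + Aterm V dd hiso q o ho v s s)) =
      Dl V q (iota V q o ho v) + Jmap V dd hiso q (iota V q o ho v) := by
  rw [Dl_lof V q o ho v, Jmap_lof V dd hiso q o ho v]
  rw [Finset.sum_congr rfl
    (fun s (_ : s ∈ Finset.univ) => by
      rw [Bdiag V dd hiso q o ho v s, Adiag V dd hiso q o ho v s])]
  rw [Finset.sum_add_distrib, Finset.sum_add_distrib, ← add_assoc]
  congr 1
  · rw [← Finset.sum_filter, ← Finset.sum_filter, Finset.sum_const, Finset.sum_const,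
      Nat.cast_smul_eq_nsmul, add_nsmul]
    exact add_comm _ _

include hanti in
lemma keyop_pos (p : ℕ) :
    (Hmap V dd hiso p).comp (Dmap V dd p) + (Dmap V dd (p + 1)).comp (Hmap V dd hiso (p + 1)) =
      Dl V (p + 1) + Jmap V dd hiso (p + 1) := by
  apply DirectSum.linearMap_ext
  rintro ⟨o, ho⟩
  apply LinearMap.ext
  intro v
  simp only [LinearMap.comp_apply, LinearMap.add_apply]
  show Hmap V dd hiso p (Dmap V dd p (iota V (p + 1) o ho v)) +
      Dmap V dd (p + 1) (Hmap V dd hiso (p + 1) (iota V (p + 1) o ho v)) =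
      Dl V (p + 1) (iota V (p + 1) o ho v) + Jmap V dd hiso (p + 1) (iota V (p + 1) o ho v)
  erw [stepB V dd hiso p o ho v, stepA V dd hiso (p + 1) o ho v]
  simp only [← Finset.sum_add_distrib]
  rw [Finset.sum_congr rfl (fun s (_ : s ∈ Finset.univ) =>
    Finset.sum_eq_single s
      (fun t _ hts => AB_off V dd hiso hanti (p + 1) o ho v s t (Ne.symm hts))
      (fun hs => absurd (Finset.mem_univ s) hs))]
  exact sum_diag V dd hiso (p + 1) o ho v

lemma keyop0 : (Dmap V dd 0).comp (Hmap V dd hiso 0) = Dl V 0 + Jmap V dd hiso 0 := by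
  apply DirectSum.linearMap_ext
  rintro ⟨o, ho⟩
  apply LinearMap.ext
  intro v
  simp only [LinearMap.comp_apply, LinearMap.add_apply]
  show Dmap V dd 0 (Hmap V dd hiso 0 (iota V 0 o ho v)) =
      Dl V 0 (iota V 0 o ho v) + Jmap V dd hiso 0 (iota V 0 o ho v)
  erw [stepA V dd hiso 0 o ho v]
  rw [Finset.sum_congr rfl (fun s (_ : s ∈ Finset.univ) =>
    Finset.sum_eq_single s
      (fun t _ hts => by
        unfold Aterm
        by_cases h : o t = 1
        · rw [dif_pos h, dif_neg (show ¬(Function.update o t 0) s = 0 by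
            rw [Function.update_of_ne (Ne.symm hts)]; exact deg0_ne o ho s)]
        · rw [dif_neg h])
      (fun hs => absurd (Finset.mem_univ s) hs))]
  rw [Finset.sum_congr rfl (fun s (_ : s ∈ Finset.univ) => Adiag V dd hiso 0 o ho v s)]
  rw [Finset.sum_add_distrib]
  erw [Dl_lof V 0 o ho v, Jmap_lof V dd hiso 0 o ho v]
  have hz : ∀ y : Cplx V 0, deg o • y = 0 := fun y => by rw [ho, zero_nsmul]
  rw [Nat.cast_smul_eq_nsmul, add_nsmul, hz, add_zero]
  congr 1
  rw [← Finset.sum_filter, Finset.sum_const]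
  rfl


lemma Hlof_zero (q : ℕ) (o : S → SignType) (ho : deg o = q) (v : V o)
    (hp : plusCount o = 0) : Hmap V dd hiso q (iota V q o ho v) = 0 := by
  rw [Hmap_lof V dd hiso q o ho v]
  exact Finset.sum_eq_zero fun s _ => dif_neg (plus0_ne o hp s)

lemma Jlof_zero (q : ℕ) (o : S → SignType) (ho : deg o = q) (v : V o)
    (hp : plusCount o = 0) : Jmap V dd hiso q (iota V q o ho v) = 0 := by
  rw [Jmap_lof V dd hiso q o ho v]
  exact Finset.sum_eq_zero fun s _ => dif_neg (plus0_ne o hp s)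

lemma one_sub_lof (q : ℕ) (o : S → SignType) (ho : deg o = q) (v : V o) :
    ((1 : Module.End ℚ (Cplx V q)) - Dl' V q * Dl V q) (iota V q o ho v) =
      (1 - (((plusCount o + deg o : ℕ) : ℚ))⁻¹ * ((plusCount o + deg o : ℕ) : ℚ)) •
        iota V q o ho v := by
  simp only [LinearMap.sub_apply, Module.End.one_apply, Module.End.mul_apply]
  rw [Dl_lof V q o ho v, map_smul, Dl'_lof V q o ho v, smul_smul, sub_smul, one_smul,
    mul_comm]

lemma HE (q : ℕ) :
    (Hmap V dd hiso q).comp ((1 : Module.End ℚ (Cplx V q)) - Dl' V q * Dl V q) = 0 := by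
  apply DirectSum.linearMap_ext
  rintro ⟨o, ho⟩
  apply LinearMap.ext
  intro v
  simp only [LinearMap.comp_apply, LinearMap.zero_comp, LinearMap.zero_apply]
  show Hmap V dd hiso q (((1 : Module.End ℚ (Cplx V q)) - Dl' V q * Dl V q) (iota V q o ho v)) = 0
  erw [one_sub_lof V q o ho v]
  rw [map_smul]
  by_cases hc : (plusCount o + deg o : ℕ) = 0
  · have hp : plusCount o = 0 := by omega
    rw [Hlof_zero V dd hiso q o ho v hp, smul_zero]
  · rw [inv_mul_cancel₀ (by exact_mod_cast hc), sub_self, zero_smul]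

lemma GE (q : ℕ) :
    ((Dl' V q).comp (Jmap V dd hiso q)).comp
      ((1 : Module.End ℚ (Cplx V q)) - Dl' V q * Dl V q) = 0 := by
  apply DirectSum.linearMap_ext
  rintro ⟨o, ho⟩
  apply LinearMap.ext
  intro v
  simp only [LinearMap.comp_apply, LinearMap.zero_comp, LinearMap.zero_apply]
  show Dl' V q (Jmap V dd hiso q
      (((1 : Module.End ℚ (Cplx V q)) - Dl' V q * Dl V q) (iota V q o ho v))) = 0
  erw [one_sub_lof V q o ho v]
  by_cases hc : (plusCount o + deg o : ℕ) = 0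
  · have hp : plusCount o = 0 := by omega
    rw [map_smul, Jlof_zero V dd hiso q o ho v hp, smul_zero, map_zero]
  · rw [inv_mul_cancel₀ (show ((plusCount o + deg o : ℕ) : ℚ) ≠ 0 from by exact_mod_cast hc),
      sub_self, zero_smul, map_zero, map_zero]

lemma DlDl'_pos (p : ℕ) : (Dl V (p + 1)).comp (Dl' V (p + 1)) = LinearMap.id := by
  apply DirectSum.linearMap_ext
  rintro ⟨o, ho⟩
  apply LinearMap.ext
  intro v
  simp only [LinearMap.comp_apply, LinearMap.id_comp, LinearMap.id_coe, id_eq]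
  show Dl V (p + 1) (Dl' V (p + 1) (iota V (p + 1) o ho v)) = iota V (p + 1) o ho v
  erw [Dl'_lof V (p + 1) o ho v]
  rw [LinearMap.map_smul]
  erw [Dl_lof V (p + 1) o ho v]
  rw [smul_smul]
  rw [inv_mul_cancel₀, one_smul]
  · have : plusCount o + deg o ≠ 0 := by rw [ho]; omega
    exact_mod_cast this

lemma Gop_lof (q : ℕ) (o : S → SignType) (ho : deg o = q) (v : V o) :
    ((Dl' V q).comp (Jmap V dd hiso q)) (iota V q o ho v) =
      ∑ s : S, if h : o s = 1 then
        ((((plusCount (Function.update (Function.update o s 0) s (-1)) +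
            deg (Function.update (Function.update o s 0) s (-1)) : ℕ) : ℚ))⁻¹) •
          iota V q (Function.update (Function.update o s 0) s (-1))
            (by have h1 := deg_update (Function.update o s 0) s (by simp) (-1) (by decide)
                have h2 := deg_upd0 o s h
                omega)
            (dd s (-1) (Function.update o s 0) (hmap V dd hiso s o h v))
      else 0 := by
  rw [LinearMap.comp_apply, Jmap_lof V dd hiso q o ho v, map_sum]
  refine Finset.sum_congr rfl fun s _ => ?_
  by_cases h : o s = 1
  · rw [dif_pos h, dif_pos h, Dl'_lof]
  · rw [dif_neg h, dif_neg h, map_zero]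

lemma G_pow_lof (q : ℕ) (k : ℕ) (o : S → SignType) (ho : deg o = q) (v : V o)
    (hk : plusCount o < k) :
    (((Dl' V q).comp (Jmap V dd hiso q)) ^ k) (iota V q o ho v) = 0 := by
  induction k generalizing o v with
  | zero => omega
  | succ k ih =>
    rw [pow_succ, Module.End.mul_apply, Gop_lof V dd hiso q o ho v, map_sum]
    refine Finset.sum_eq_zero fun s _ => ?_
    by_cases h : o s = 1
    · rw [dif_pos h, map_smul]
      rw [ih (Function.update (Function.update o s 0) s (-1)) _ _
        (by have := plusCount_J o s h; have := plusCount_pos o s h; omega)]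
      rw [smul_zero]
    · rw [dif_neg h, map_zero]

lemma G_nilp (q : ℕ) :
    (((Dl' V q).comp (Jmap V dd hiso q)) ^ (Fintype.card S + 1)) = 0 := by
  apply DirectSum.linearMap_ext
  rintro ⟨o, ho⟩
  apply LinearMap.ext
  intro v
  simp only [LinearMap.comp_apply, LinearMap.zero_comp, LinearMap.zero_apply]
  show (((Dl' V q).comp (Jmap V dd hiso q)) ^ (Fintype.card S + 1)) (iota V q o ho v) = 0
  erw [G_pow_lof V dd hiso q (Fintype.card S + 1) o ho v
    (by have := plusCount_le o; omega)]

lemma B_pow_succ (q : ℕ) (n : ℕ) :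
    ((Jmap V dd hiso q).comp (Dl' V q)) ^ (n + 1) =
      ((Jmap V dd hiso q) * ((Dl' V q).comp (Jmap V dd hiso q)) ^ n) * Dl' V q := by
  induction n with
  | zero => rw [pow_one, pow_zero, mul_one]; rfl
  | succ n ih =>
    rw [pow_succ, ih]
    rw [show ((Jmap V dd hiso q).comp (Dl' V q)) = Jmap V dd hiso q * Dl' V q from rfl]
    rw [pow_succ]
    noncomm_ring

lemma B_nilp (q : ℕ) :
    ((Jmap V dd hiso q).comp (Dl' V q)) ^ (Fintype.card S + 2) = 0 := by
  rw [B_pow_succ V dd hiso q (Fintype.card S + 1), G_nilp V dd hiso q]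
  simp

lemma geom_right {R : Type} [Ring R] (x : R) (n : ℕ) :
    (∑ i ∈ Finset.range n, x ^ i) * (1 - x) = 1 - x ^ n := by
  induction n with
  | zero => simp
  | succ n ih =>
    rw [Finset.sum_range_succ, add_mul, ih, pow_succ]
    noncomm_ring

lemma geom_left {R : Type} [Ring R] (x : R) (n : ℕ) :
    (1 - x) * (∑ i ∈ Finset.range n, x ^ i) = 1 - x ^ n := by
  induction n with
  | zero => simp
  | succ n ih =>
    rw [Finset.sum_range_succ, mul_add, ih, pow_succ']
    noncomm_ring

lemma N_surj (p : ℕ) :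
    Function.Surjective (Dl V (p + 1) + Jmap V dd hiso (p + 1) :
      Cplx V (p + 1) →ₗ[ℚ] Cplx V (p + 1)) := by
  set B : Module.End ℚ (Cplx V (p + 1)) := (Jmap V dd hiso (p + 1)).comp (Dl' V (p + 1))
    with hB
  set M : Module.End ℚ (Cplx V (p + 1)) :=
    Dl' V (p + 1) * (∑ i ∈ Finset.range (Fintype.card S + 2), (-B) ^ i) with hM
  have key : (Dl V (p + 1) + Jmap V dd hiso (p + 1)) * M = 1 := by
    rw [hM, ← mul_assoc, add_mul,
      show Dl V (p + 1) * Dl' V (p + 1) = 1 from DlDl'_pos V p]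
    have hJD : Jmap V dd hiso (p + 1) * Dl' V (p + 1) = B := rfl
    rw [hJD]
    have h1 : (1 + B) = 1 - (-B) := by noncomm_ring
    rw [h1, geom_left]
    have h2 : (-B) ^ (Fintype.card S + 2) = 0 := by
      rw [neg_pow]
      rw [show B ^ (Fintype.card S + 2) = 0 from B_nilp V dd hiso (p + 1)]
      simp
    rw [h2, sub_zero]
  intro x
  exact ⟨M x, by rw [← Module.End.mul_apply, key, Module.End.one_apply]⟩

lemma kerN (q : ℕ) (w : Cplx V q)
    (hw : (Dl V q + Jmap V dd hiso q) w = 0) : Hmap V dd hiso q w = 0 := by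
  set G : Module.End ℚ (Cplx V q) := (Dl' V q).comp (Jmap V dd hiso q) with hG
  set E : Module.End ℚ (Cplx V q) := (1 : Module.End ℚ (Cplx V q)) - Dl' V q * Dl V q
    with hE
  have h0 : (Dl' V q * Dl V q) w + G w = 0 := by
    have := congrArg (Dl' V q) hw
    rw [map_zero] at this
    rw [LinearMap.add_apply] at this
    rw [map_add] at this
    exact this
  have h1 : ((1 : Module.End ℚ (Cplx V q)) + G) w = E w := by
    rw [hE]
    simp only [LinearMap.add_apply, LinearMap.sub_apply, Module.End.one_apply,
      Module.End.one_apply]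
    have : G w = -((Dl' V q * Dl V q) w) := eq_neg_of_add_eq_zero_right h0
    rw [this]
    abel
  have hGE : G * E = 0 := by
    rw [hG, hE]
    exact GE V dd hiso q
  have hsum : (∑ i ∈ Finset.range (Fintype.card S + 2), (-G) ^ i) * (1 + G) = 1 := by
    have h1' : (1 + G) = 1 - (-G) := by noncomm_ring
    rw [h1', geom_right]
    have h2 : (-G) ^ (Fintype.card S + 2) = 0 := by
      rw [neg_pow]
      rw [show G ^ (Fintype.card S + 2) = 0 from by
        rw [pow_succ, show G ^ (Fintype.card S + 1) = 0 from G_nilp V dd hiso q, zero_mul]]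
      simp
    rw [h2, sub_zero]
  have hwE : w = E w := by
    conv_lhs => rw [← Module.End.one_apply (R := ℚ) w, ← hsum]
    rw [Module.End.mul_apply, h1]
    rw [LinearMap.sum_apply]
    rw [Finset.sum_eq_single 0]
    · rw [pow_zero, Module.End.one_apply]
    · intro i _ hi
      obtain ⟨j, rfl⟩ : ∃ j, i = j + 1 := ⟨i - 1, by omega⟩
      rw [pow_succ, Module.End.mul_apply]
      have : (-G) (E w) = 0 := by
        have : G (E w) = 0 := by rw [← Module.End.mul_apply, hGE, LinearMap.zero_apply]
        rw [LinearMap.neg_apply, this, neg_zero]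
      rw [this, map_zero]
    · intro h
      exact absurd (Finset.mem_range.mpr (by omega)) h
  rw [hwE, ← LinearMap.comp_apply, HE V dd hiso q, LinearMap.zero_apply]


include hanti in
lemma NDcomm (p : ℕ) :
    (Dl V p + Jmap V dd hiso p).comp (Dmap V dd p)
      = (Dmap V dd p).comp (Dl V (p + 1) + Jmap V dd hiso (p + 1)) := by
  cases p with
  | zero =>
    rw [← keyop0 V dd hiso, ← keyop_pos V dd hiso hanti 0]
    rw [LinearMap.comp_add]
    rw [← LinearMap.comp_assoc, ← LinearMap.comp_assoc, Dsq V dd hanti 0,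
      LinearMap.zero_comp, add_zero]
  | succ n =>
    rw [← keyop_pos V dd hiso hanti n, ← keyop_pos V dd hiso hanti (n + 1)]
    rw [LinearMap.add_comp, LinearMap.comp_add]
    rw [LinearMap.comp_assoc, Dsq V dd hanti n, LinearMap.comp_zero, zero_add]
    rw [← LinearMap.comp_assoc (Hmap V dd hiso (n + 1 + 1)) (Dmap V dd (n + 1 + 1))
      (Dmap V dd (n + 1)), Dsq V dd hanti (n + 1), LinearMap.zero_comp, add_zero]
    rw [LinearMap.comp_assoc]

end Aux

/-- given vector spaces `V_o` for `o : S → {-, 0, +}` and, for each `s` and `o`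
with `o s = 0`, isomorphisms `d_s^± : V_o → V_{o_s^±}` which pairwise anticommute, the graded
vector space `C_p = ⊕_{deg o = p} V_o` with `d = Σ_s (d_s^+ + d_s^-)` is a chain complex whose
homology is concentrated in degree `0`. -/
theorem stmt_8 (S : Type) [Fintype S] [DecidableEq S]
    (V : (S → SignType) → Type) [∀ o, AddCommGroup (V o)] [∀ o, Module ℚ (V o)]
    (dd : ∀ (s : S) (a : SignType) (o : S → SignType), V o →ₗ[ℚ] V (Function.update o s a))
    (hiso : ∀ (s : S) (o : S → SignType), o s = 0 →
      ∀ a : SignType, a ≠ 0 → Function.Bijective (dd s a o))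
    (hanti : ∀ (s s' : S) (hss' : s ≠ s') (o : S → SignType), o s = 0 → o s' = 0 →
      ∀ (a b : SignType), a ≠ 0 → b ≠ 0 →
        (dd s b (Function.update o s' a)).comp (dd s' a o) =
          -((vcast V (Function.update_comm hss' b a o)).toLinearMap.comp
              ((dd s' a (Function.update o s b)).comp (dd s b o)))) :
    (∀ p : ℕ, (Dmap V dd p).comp (Dmap V dd (p + 1)) = 0) ∧
      (∀ (p : ℕ) (x : Cplx V (p + 1)), Dmap V dd p x = 0 →
        x ∈ LinearMap.range (Dmap V dd (p + 1))) := by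
  constructor
  · exact fun p => Dsq V dd hanti p
  · intro p x hx
    obtain ⟨z, hz⟩ := N_surj V dd hiso p x
    have hw : (Dl V p + Jmap V dd hiso p) (Dmap V dd p z) = 0 := by
      have h1 := LinearMap.congr_fun (NDcomm V dd hiso hanti p) z
      rw [LinearMap.comp_apply, LinearMap.comp_apply] at h1
      rw [h1, hz, hx]
    have hH : Hmap V dd hiso p (Dmap V dd p z) = 0 := kerN V dd hiso p _ hw
    have hz' : Dl V (p + 1) z + Jmap V dd hiso (p + 1) z = x := hz
    have hk : Hmap V dd hiso p (Dmap V dd p z)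
        + Dmap V dd (p + 1) (Hmap V dd hiso (p + 1) z)
        = Dl V (p + 1) z + Jmap V dd hiso (p + 1) z :=
      LinearMap.congr_fun (keyop_pos V dd hiso hanti p) z
    refine ⟨Hmap V dd hiso (p + 1) z, ?_⟩
    calc Dmap V dd (p + 1) (Hmap V dd hiso (p + 1) z)
        = Hmap V dd hiso p (Dmap V dd p z)
          + Dmap V dd (p + 1) (Hmap V dd hiso (p + 1) z) := by rw [hH, zero_add]
      _ = x := hk.trans hz'
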